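/- arXiv:1807.10988 — 3 statements merged into one kernel-verified Lean document; each statement's English description precedes it below -/
import Mathlib

section
/- Let G be a graph with a Naji-system solution β, and let {a,b,c,d} induce a K₄ in G such that every 4-cycle on {a,b,c,d} is odd with respect to β. Suppose (X_a, X_b, X_c, X_d) are disjoint vertex sets with a ∈ X_a, b ∈ X_b, c ∈ X_c, d ∈ X_d such that for every choice a' ∈ X_a, b' ∈ X_b, c' ∈ X_c, d' ∈ X_d, the set {a',b',c',d'} induces a K₄ all of whose 4-cycles are odd, and suppose (X_a,X_b,X_c,X_d) is maximal with this property. Let X = X_a ∪ X_b ∪ X_c ∪ X_d. Then every vertex v ∈ V(G) − X is either adjacent to vertices in at most one of the sets X_a, X_b, X_c, X_d, or adjacent to every vertex of X. -/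
set_option maxRecDepth 100000
set_option synthInstance.maxHeartbeats 1000000
set_option synthInstance.maxSize 2000
set_option maxHeartbeats 2000000

/-- A solution to the Naji system of a graph `G`. -/
def NajiSolution {V : Type*} (G : SimpleGraph V) (β : V → V → ZMod 2) : Prop :=
  (∀ v w : V, G.Adj v w → β v w + β w v = 1) ∧
  (∀ x v w : V, x ≠ v → x ≠ w → G.Adj v w → ¬G.Adj x v → ¬G.Adj x w →
    β x v + β x w = 0) ∧
  (∀ x v w : V, v ≠ w → G.Adj x v → G.Adj x w → ¬G.Adj v w →
    β v w + β w v + β x v + β x w = 1)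

/-- `{a,b,c,d}` induces a `K₄` in `G` and, with respect to `β`, each of its
three 4-cycles is odd. -/
def IsK4Obstruction {V : Type*} (G : SimpleGraph V) (β : V → V → ZMod 2)
    (a b c d : V) : Prop :=
  G.Adj a b ∧ G.Adj a c ∧ G.Adj a d ∧ G.Adj b c ∧ G.Adj b d ∧ G.Adj c d ∧
  β a b + β b c + β c d + β d a = 1 ∧
  β a b + β b d + β d c + β c a = 1 ∧
  β a c + β c b + β b d + β d a = 1

/-- All choices of representatives from `(Xa, Xb, Xc, Xd)` give `K₄`-obstructions. -/
def AllObstructions {V : Type*} (G : SimpleGraph V) (β : V → V → ZMod 2)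
    (Xa Xb Xc Xd : Set V) : Prop :=
  ∀ a' ∈ Xa, ∀ b' ∈ Xb, ∀ c' ∈ Xc, ∀ d' ∈ Xd, IsK4Obstruction G β a' b' c' d'

/- ### Auxiliary ZMod 2 identities, proved by enumeration -/

private lemma zmod2_perm : ∀ ab ba ac ca ad da bc cb bd db cd dc : ZMod 2,
    ab + ba = 1 → ac + ca = 1 → ad + da = 1 →
    bc + cb = 1 → bd + db = 1 → cd + dc = 1 →
    ab + bc + cd + da = 1 → ab + bd + dc + ca = 1 →
    ac + cb + bd + da = 1 →
    (ba + ac + cd + db = 1 ∧ ba + ad + dc + cb = 1 ∧ bc + ca + ad + db = 1) ∧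
    ac + cd + db + ba = 1 ∧ ad + db + bc + ca = 1 := by decide

private lemma zmod2_no2 : ∀ vc cv av ac vd dv ad bv bc bd cb da : ZMod 2,
    vc + cv + av + ac = 1 → vd + dv + av + ad = 1 →
    vc + cv + bv + bc = 1 → vd + dv + bv + bd = 1 →
    ac + cb + bd + da = 1 → cb + bc = 1 → da + ad = 1 → False := by decide

private lemma zmod2_cB1 : ∀ ab bc cv va cd da vd dv av ad : ZMod 2,
    ab + bc + cd + da = 1 → vd + dv + av + ad = 1 → vd + dv + cv + cd = 1 →
    va + av = 1 → da + ad = 1 → ab + bc + cv + va = 1 := by decide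

private lemma zmod2_cB2 : ∀ ab bd dc ca vd dv bv cv cd vc : ZMod 2,
    ab + bd + dc + ca = 1 → vd + dv + bv + bd = 1 → vd + dv + cv + cd = 1 →
    vc + cv = 1 → cd + dc = 1 → ab + bv + vc + ca = 1 := by decide

private lemma zmod2_cB3 : ∀ ac cb bd da vd dv bv av ad va : ZMod 2,
    ac + cb + bd + da = 1 → vd + dv + bv + bd = 1 → vd + dv + av + ad = 1 →
    va + av = 1 → da + ad = 1 → ac + cb + bv + va = 1 := by decide

/- ### Permutation lemmas for `IsK4Obstruction` -/

section Perm

variable {V : Type*} {G : SimpleGraph V} {β : V → V → ZMod 2}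

private lemma obs_swap12 (hβ : NajiSolution G β) {a b c d : V}
    (h : IsK4Obstruction G β a b c d) : IsK4Obstruction G β b a c d := by
  obtain ⟨hab, hac, had, hbc, hbd, hcd, e1, e2, e3⟩ := h
  obtain ⟨⟨E1, E2, E3⟩, -, -⟩ := zmod2_perm (β a b) (β b a) (β a c) (β c a) (β a d) (β d a)
    (β b c) (β c b) (β b d) (β d b) (β c d) (β d c)
    (hβ.1 a b hab) (hβ.1 a c hac) (hβ.1 a d had) (hβ.1 b c hbc) (hβ.1 b d hbd)
    (hβ.1 c d hcd) e1 e2 e3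
  exact ⟨hab.symm, hbc, hbd, hac, had, hcd, E1, E2, E3⟩

private lemma obs_swap23 (hβ : NajiSolution G β) {a b c d : V}
    (h : IsK4Obstruction G β a b c d) : IsK4Obstruction G β a c b d := by
  obtain ⟨hab, hac, had, hbc, hbd, hcd, e1, e2, e3⟩ := h
  obtain ⟨-, E2, -⟩ := zmod2_perm (β a b) (β b a) (β a c) (β c a) (β a d) (β d a)
    (β b c) (β c b) (β b d) (β d b) (β c d) (β d c)
    (hβ.1 a b hab) (hβ.1 a c hac) (hβ.1 a d had) (hβ.1 b c hbc) (hβ.1 b d hbd)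
    (hβ.1 c d hcd) e1 e2 e3
  exact ⟨hac, hab, had, hbc.symm, hcd, hbd, e3, E2, e1⟩

private lemma obs_swap34 (hβ : NajiSolution G β) {a b c d : V}
    (h : IsK4Obstruction G β a b c d) : IsK4Obstruction G β a b d c := by
  obtain ⟨hab, hac, had, hbc, hbd, hcd, e1, e2, e3⟩ := h
  obtain ⟨-, -, E3⟩ := zmod2_perm (β a b) (β b a) (β a c) (β c a) (β a d) (β d a)
    (β b c) (β c b) (β b d) (β d b) (β c d) (β d c)
    (hβ.1 a b hab) (hβ.1 a c hac) (hβ.1 a d had) (hβ.1 b c hbc) (hβ.1 b d hbd)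
    (hβ.1 c d hcd) e1 e2 e3
  exact ⟨hab, had, hac, hbd, hbc, hcd.symm, e2, e1, E3⟩

private lemma obs_cycle3 (hβ : NajiSolution G β) {a b c d : V}
    (h : IsK4Obstruction G β a b c d) : IsK4Obstruction G β b c a d :=
  obs_swap23 hβ (obs_swap12 hβ h)

/-- Claim: no vertex is adjacent to exactly two vertices of a K₄-obstruction. -/
private lemma obs_no2 (hβ : NajiSolution G β) {a b c d v : V}
    (h : IsK4Obstruction G β a b c d) (h1 : G.Adj v a) (h2 : G.Adj v b)
    (h3 : ¬G.Adj v c) (h4 : ¬G.Adj v d) (hc : v ≠ c) (hd : v ≠ d) : False := by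
  obtain ⟨hab, hac, had, hbc, hbd, hcd, e1, e2, e3⟩ := h
  exact zmod2_no2 (β v c) (β c v) (β a v) (β a c) (β v d) (β d v) (β a d) (β b v)
    (β b c) (β b d) (β c b) (β d a)
    (hβ.2.2 a v c hc h1.symm hac h3)
    (hβ.2.2 a v d hd h1.symm had h4)
    (hβ.2.2 b v c hc h2.symm hbc h3)
    (hβ.2.2 b v d hd h2.symm hbd h4)
    e3 (hβ.1 c b hbc.symm) (hβ.1 d a had.symm)

/-- Claim B: replacing `d` by a vertex `v` adjacent to `a,b,c` but not `d`. -/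
private lemma obs_claimB (hβ : NajiSolution G β) {a b c d v : V}
    (h : IsK4Obstruction G β a b c d) (hva : G.Adj v a) (hvb : G.Adj v b)
    (hvc : G.Adj v c) (hnd : ¬G.Adj v d) (hvd : v ≠ d) :
    IsK4Obstruction G β a b c v := by
  obtain ⟨hab, hac, had, hbc, hbd, hcd, e1, e2, e3⟩ := h
  have ea := hβ.2.2 a v d hvd hva.symm had hnd
  have eb := hβ.2.2 b v d hvd hvb.symm hbd hnd
  have ec := hβ.2.2 c v d hvd hvc.symm hcd hnd
  refine ⟨hab, hac, hva.symm, hbc, hvb.symm, hvc.symm, ?_, ?_, ?_⟩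
  · exact zmod2_cB1 (β a b) (β b c) (β c v) (β v a) (β c d) (β d a) (β v d) (β d v)
      (β a v) (β a d) e1 ea ec (hβ.1 v a hva) (hβ.1 d a had.symm)
  · exact zmod2_cB2 (β a b) (β b d) (β d c) (β c a) (β v d) (β d v) (β b v) (β c v)
      (β c d) (β v c) e2 eb ec (hβ.1 v c hvc) (hβ.1 c d hcd)
  · exact zmod2_cB3 (β a c) (β c b) (β b d) (β d a) (β v d) (β d v) (β b v) (β a v)
      (β a d) (β v a) e3 eb ea (hβ.1 v a hva) (hβ.1 d a had.symm)

private lemma allObs_swap12 (hβ : NajiSolution G β) {X1 X2 X3 X4 : Set V}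
    (h : AllObstructions G β X1 X2 X3 X4) : AllObstructions G β X2 X1 X3 X4 :=
  fun a' ha b' hb c' hc d' hd => obs_swap12 hβ (h b' hb a' ha c' hc d' hd)

private lemma allObs_swap23 (hβ : NajiSolution G β) {X1 X2 X3 X4 : Set V}
    (h : AllObstructions G β X1 X2 X3 X4) : AllObstructions G β X1 X3 X2 X4 :=
  fun a' ha b' hb c' hc d' hd => obs_swap23 hβ (h a' ha c' hc b' hb d' hd)

private lemma allObs_swap34 (hβ : NajiSolution G β) {X1 X2 X3 X4 : Set V}
    (h : AllObstructions G β X1 X2 X3 X4) : AllObstructions G β X1 X2 X4 X3 :=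
  fun a' ha b' hb c' hc d' hd => obs_swap34 hβ (h a' ha b' hb d' hd c' hc)

private lemma allObs_cycle3 (hβ : NajiSolution G β) {X1 X2 X3 X4 : Set V}
    (h : AllObstructions G β X1 X2 X3 X4) : AllObstructions G β X2 X3 X1 X4 :=
  fun a' ha b' hb c' hc d' hd => obs_cycle3 hβ (h c' hc a' ha b' hb d' hd)

/- ### Main auxiliary lemmas -/

/-- If `v` has a neighbour in `X1` and in `X2`, then `v` is complete to `X1`. -/
private lemma auxA (hβ : NajiSolution G β) {X1 X2 X3 X4 : Set V}
    (hobs : AllObstructions G β X1 X2 X3 X4) {v : V}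
    (hv1 : v ∉ X1) (hv2 : v ∉ X2) (hv3 : v ∉ X3) (hv4 : v ∉ X4)
    (hm1 : ¬AllObstructions G β (insert v X1) X2 X3 X4)
    {u1 u2 : V} (hu1 : u1 ∈ X1) (hu2 : u2 ∈ X2)
    (h1 : G.Adj v u1) (h2 : G.Adj v u2) :
    ∀ u ∈ X1, G.Adj v u := by
  by_contra hcon
  push_neg at hcon
  obtain ⟨a₀, ha₀, hna₀⟩ := hcon
  unfold AllObstructions at hm1
  push_neg at hm1
  obtain ⟨a', ha', b', hb', c', hc', d', hd', hno⟩ := hm1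
  rcases Set.mem_insert_iff.mp ha' with rfl | haX
  · have ob : IsK4Obstruction G β a₀ b' c' d' := hobs a₀ ha₀ b' hb' c' hc' d' hd'
    have ob1 : IsK4Obstruction G β u1 b' c' d' := hobs u1 hu1 b' hb' c' hc' d' hd'
    have ob2 : IsK4Obstruction G β u1 u2 c' d' := hobs u1 hu1 u2 hu2 c' hc' d' hd'
    have hva₀ : a' ≠ a₀ := fun h => hv1 (h ▸ ha₀)
    have hvb' : a' ≠ b' := fun h => hv2 (h ▸ hb')
    have hvc' : a' ≠ c' := fun h => hv3 (h ▸ hc')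
    have hvd' : a' ≠ d' := fun h => hv4 (h ▸ hd')
    by_cases xb : G.Adj a' b' <;> by_cases xc : G.Adj a' c' <;> by_cases xd : G.Adj a' d'
    · -- adjacent to b', c', d' : Claim B contradicts hno
      have o : IsK4Obstruction G β b' c' d' a₀ := obs_swap34 hβ (obs_cycle3 hβ ob)
      have o2 := obs_claimB hβ o xb xc xd hna₀ hva₀
      exact hno (obs_swap12 hβ (obs_swap23 hβ (obs_swap34 hβ o2)))
    · exact obs_no2 hβ (obs_cycle3 hβ ob) xb xc hna₀ xd hva₀ hvd'
    · exact obs_no2 hβ (obs_cycle3 hβ (obs_swap34 hβ ob)) xb xd hna₀ xc hva₀ hvc'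
    · exact obs_no2 hβ ob1 h1 xb xc xd hvc' hvd'
    · exact obs_no2 hβ
        (obs_swap34 hβ (obs_cycle3 hβ (obs_swap34 hβ (obs_cycle3 hβ ob))))
        xc xd hna₀ xb hva₀ hvb'
    · exact obs_no2 hβ (obs_swap23 hβ ob1) h1 xc xb xd hvb' hvd'
    · exact obs_no2 hβ (obs_swap23 hβ (obs_swap34 hβ ob1)) h1 xd xb xc hvb' hvc'
    · exact obs_no2 hβ ob2 h1 h2 xc xd hvc' hvd'
  · exact hno (hobs a' haX b' hb' c' hc' d' hd')

/-- If `v` is complete to `X1` and to `X2`, then `v` is complete to `X3`. -/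
private lemma auxC (hβ : NajiSolution G β) {X1 X2 X3 X4 : Set V}
    (hobs : AllObstructions G β X1 X2 X3 X4) {v : V}
    (hv3 : v ∉ X3) (hv4 : v ∉ X4)
    (hm3 : ¬AllObstructions G β X1 X2 (insert v X3) X4)
    (hca : ∀ u ∈ X1, G.Adj v u) (hcb : ∀ u ∈ X2, G.Adj v u) :
    ∀ u ∈ X3, G.Adj v u := by
  by_contra hcon
  push_neg at hcon
  obtain ⟨c₀, hc₀, hnc₀⟩ := hcon
  unfold AllObstructions at hm3
  push_neg at hm3
  obtain ⟨a', ha', b', hb', c', hc', d', hd', hno⟩ := hm3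
  rcases Set.mem_insert_iff.mp hc' with rfl | hcX
  · have ob : IsK4Obstruction G β a' b' c₀ d' := hobs a' ha' b' hb' c₀ hc₀ d' hd'
    have hvc₀ : c' ≠ c₀ := fun h => hv3 (h ▸ hc₀)
    have hvd' : c' ≠ d' := fun h => hv4 (h ▸ hd')
    by_cases xd : G.Adj c' d'
    · have o2 := obs_claimB hβ (obs_swap34 hβ ob) (hca a' ha') (hcb b' hb') xd hnc₀ hvc₀
      exact hno (obs_swap34 hβ o2)
    · exact obs_no2 hβ ob (hca a' ha') (hcb b' hb') hnc₀ xd hvc₀ hvd'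
  · exact hno (hobs a' ha' b' hb' c' hcX d' hd')

/-- If `v` has neighbours in the first two of the four sets, it is complete
to all of them. -/
private lemma aux_all (hβ : NajiSolution G β) {X1 X2 X3 X4 : Set V}
    (hobs : AllObstructions G β X1 X2 X3 X4) {v : V}
    (hv1 : v ∉ X1) (hv2 : v ∉ X2) (hv3 : v ∉ X3) (hv4 : v ∉ X4)
    (hm1 : ¬AllObstructions G β (insert v X1) X2 X3 X4)
    (hm2 : ¬AllObstructions G β X1 (insert v X2) X3 X4)
    (hm3 : ¬AllObstructions G β X1 X2 (insert v X3) X4)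
    (hm4 : ¬AllObstructions G β X1 X2 X3 (insert v X4))
    {u1 u2 : V} (hu1 : u1 ∈ X1) (hu2 : u2 ∈ X2)
    (h1 : G.Adj v u1) (h2 : G.Adj v u2) :
    (∀ u ∈ X1, G.Adj v u) ∧ (∀ u ∈ X2, G.Adj v u) ∧
    (∀ u ∈ X3, G.Adj v u) ∧ (∀ u ∈ X4, G.Adj v u) := by
  have cA := auxA hβ hobs hv1 hv2 hv3 hv4 hm1 hu1 hu2 h1 h2
  have cB := auxA hβ (allObs_swap12 hβ hobs) hv2 hv1 hv3 hv4
    (fun h => hm2 (allObs_swap12 hβ h)) hu2 hu1 h2 h1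
  have cC := auxC hβ hobs hv3 hv4 hm3 cA cB
  have cD := auxC hβ (allObs_swap34 hβ hobs) hv4 hv3
    (fun h => hm4 (allObs_swap34 hβ h)) cA cB
  exact ⟨cA, cB, cC, cD⟩

end Perm

/-- If `(Xa,Xb,Xc,Xd)` is a maximal family of disjoint sets, each containing a
vertex of a `K₄`-obstruction, such that every choice of representatives gives a
`K₄`-obstruction, then every vertex `v` outside `X = Xa ∪ Xb ∪ Xc ∪ Xd` either
has neighbours in at most one of the four sets, or is adjacent to every vertex
of `X`. -/
theorem naji_K4_neighbours {V : Type*} (G : SimpleGraph V) (β : V → V → ZMod 2)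
    (hβ : NajiSolution G β) (a b c d : V)
    (Xa Xb Xc Xd : Set V)
    (ha : a ∈ Xa) (hb : b ∈ Xb) (hc : c ∈ Xc) (hd : d ∈ Xd)
    (hdab : Disjoint Xa Xb) (hdac : Disjoint Xa Xc) (hdad : Disjoint Xa Xd)
    (hdbc : Disjoint Xb Xc) (hdbd : Disjoint Xb Xd) (hdcd : Disjoint Xc Xd)
    (hobs : AllObstructions G β Xa Xb Xc Xd)
    (hmax : ∀ v : V, v ∉ Xa ∪ Xb ∪ Xc ∪ Xd →
      ¬AllObstructions G β (insert v Xa) Xb Xc Xd ∧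
      ¬AllObstructions G β Xa (insert v Xb) Xc Xd ∧
      ¬AllObstructions G β Xa Xb (insert v Xc) Xd ∧
      ¬AllObstructions G β Xa Xb Xc (insert v Xd)) :
    ∀ v : V, v ∉ Xa ∪ Xb ∪ Xc ∪ Xd →
      (∀ S T : Set V, (S = Xa ∨ S = Xb ∨ S = Xc ∨ S = Xd) →
        (T = Xa ∨ T = Xb ∨ T = Xc ∨ T = Xd) → S ≠ T →
        (∃ u ∈ S, G.Adj v u) → ¬∃ u ∈ T, G.Adj v u) ∨
      (∀ u ∈ Xa ∪ Xb ∪ Xc ∪ Xd, G.Adj v u) := by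
  intro v hv
  obtain ⟨hm1, hm2, hm3, hm4⟩ := hmax v hv
  have hva : v ∉ Xa := fun h => hv (by simp [h])
  have hvb : v ∉ Xb := fun h => hv (by simp [h])
  have hvc : v ∉ Xc := fun h => hv (by simp [h])
  have hvd : v ∉ Xd := fun h => hv (by simp [h])
  -- helper to conclude the right disjunct from completeness to each set
  have finish : (∀ u ∈ Xa, G.Adj v u) → (∀ u ∈ Xb, G.Adj v u) →
      (∀ u ∈ Xc, G.Adj v u) → (∀ u ∈ Xd, G.Adj v u) →
      (∀ u ∈ Xa ∪ Xb ∪ Xc ∪ Xd, G.Adj v u) := by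
    intro cA cB cC cD u hu
    rcases hu with ((hu | hu) | hu) | hu
    exacts [cA u hu, cB u hu, cC u hu, cD u hu]
  by_cases pa : ∃ u ∈ Xa, G.Adj v u
  · obtain ⟨uA, huA, hA⟩ := pa
    by_cases pb : ∃ u ∈ Xb, G.Adj v u
    · obtain ⟨uB, huB, hB⟩ := pb
      obtain ⟨c1, c2, c3, c4⟩ := aux_all hβ hobs hva hvb hvc hvd hm1 hm2 hm3 hm4
        huA huB hA hB
      exact Or.inr (finish c1 c2 c3 c4)
    · by_cases pc : ∃ u ∈ Xc, G.Adj v u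
      · obtain ⟨uC, huC, hC⟩ := pc
        -- ordering (Xa, Xc, Xb, Xd); back-map is swap23
        obtain ⟨c1, c3, c2, c4⟩ := aux_all hβ (allObs_swap23 hβ hobs) hva hvc hvb hvd
          (fun h => hm1 (allObs_swap23 hβ h)) (fun h => hm3 (allObs_swap23 hβ h))
          (fun h => hm2 (allObs_swap23 hβ h)) (fun h => hm4 (allObs_swap23 hβ h))
          huA huC hA hC
        exact Or.inr (finish c1 c2 c3 c4)
      · by_cases pd : ∃ u ∈ Xd, G.Adj v u
        · obtain ⟨uD, huD, hD⟩ := pd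
          -- ordering (Xa, Xd, Xb, Xc); back-map ψ := swap34 ∘ swap23
          obtain ⟨c1, c4, c2, c3⟩ := aux_all hβ
            (allObs_swap23 hβ (allObs_swap34 hβ hobs)) hva hvd hvb hvc
            (fun h => hm1 (allObs_swap34 hβ (allObs_swap23 hβ h)))
            (fun h => hm4 (allObs_swap34 hβ (allObs_swap23 hβ h)))
            (fun h => hm2 (allObs_swap34 hβ (allObs_swap23 hβ h)))
            (fun h => hm3 (allObs_swap34 hβ (allObs_swap23 hβ h)))
            huA huD hA hD
          exact Or.inr (finish c1 c2 c3 c4)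
        · -- only Xa may have neighbours
          refine Or.inl ?_
          rintro S T hS hT hne hPS hPT
          rcases hS with rfl | rfl | rfl | rfl <;> rcases hT with rfl | rfl | rfl | rfl <;>
            first
              | exact hne rfl
              | exact pb hPT | exact pc hPT | exact pd hPT
              | exact pb hPS | exact pc hPS | exact pd hPS
  · by_cases pb : ∃ u ∈ Xb, G.Adj v u
    · obtain ⟨uB, huB, hB⟩ := pb
      by_cases pc : ∃ u ∈ Xc, G.Adj v u
      · obtain ⟨uC, huC, hC⟩ := pc
        -- ordering (Xb, Xc, Xa, Xd); back-map ψ := cycle3 ∘ cycle3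
        obtain ⟨c2, c3, c1, c4⟩ := aux_all hβ
          (allObs_cycle3 hβ hobs) hvb hvc hva hvd
          (fun h => hm2 (allObs_cycle3 hβ (allObs_cycle3 hβ h)))
          (fun h => hm3 (allObs_cycle3 hβ (allObs_cycle3 hβ h)))
          (fun h => hm1 (allObs_cycle3 hβ (allObs_cycle3 hβ h)))
          (fun h => hm4 (allObs_cycle3 hβ (allObs_cycle3 hβ h)))
          huB huC hB hC
        exact Or.inr (finish c1 c2 c3 c4)
      · by_cases pd : ∃ u ∈ Xd, G.Adj v u
        · obtain ⟨uD, huD, hD⟩ := pd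
          -- ordering (Xb, Xd, Xa, Xc); back-map ψ := swap34 ∘ cycle3 ∘ cycle3
          obtain ⟨c2, c4, c1, c3⟩ := aux_all hβ
            (allObs_cycle3 hβ (allObs_swap34 hβ hobs)) hvb hvd hva hvc
            (fun h => hm2 (allObs_swap34 hβ (allObs_cycle3 hβ (allObs_cycle3 hβ h))))
            (fun h => hm4 (allObs_swap34 hβ (allObs_cycle3 hβ (allObs_cycle3 hβ h))))
            (fun h => hm1 (allObs_swap34 hβ (allObs_cycle3 hβ (allObs_cycle3 hβ h))))
            (fun h => hm3 (allObs_swap34 hβ (allObs_cycle3 hβ (allObs_cycle3 hβ h))))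
            huB huD hB hD
          exact Or.inr (finish c1 c2 c3 c4)
        · refine Or.inl ?_
          rintro S T hS hT hne hPS hPT
          rcases hS with rfl | rfl | rfl | rfl <;> rcases hT with rfl | rfl | rfl | rfl <;>
            first
              | exact hne rfl
              | exact pa hPT | exact pc hPT | exact pd hPT
              | exact pa hPS | exact pc hPS | exact pd hPS
    · by_cases pc : ∃ u ∈ Xc, G.Adj v u
      · obtain ⟨uC, huC, hC⟩ := pc
        by_cases pd : ∃ u ∈ Xd, G.Adj v u
        · obtain ⟨uD, huD, hD⟩ := pd
          -- ordering (Xc, Xd, Xa, Xb); back-map ψ := swap23 ∘ swap34 ∘ cycle3 ∘ cycle3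
          obtain ⟨c3, c4, c1, c2⟩ := aux_all hβ
            (allObs_cycle3 hβ (allObs_swap34 hβ (allObs_swap23 hβ hobs)))
            hvc hvd hva hvb
            (fun h => hm3 (allObs_swap23 hβ (allObs_swap34 hβ
              (allObs_cycle3 hβ (allObs_cycle3 hβ h)))))
            (fun h => hm4 (allObs_swap23 hβ (allObs_swap34 hβ
              (allObs_cycle3 hβ (allObs_cycle3 hβ h)))))
            (fun h => hm1 (allObs_swap23 hβ (allObs_swap34 hβ
              (allObs_cycle3 hβ (allObs_cycle3 hβ h)))))
            (fun h => hm2 (allObs_swap23 hβ (allObs_swap34 hβ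
              (allObs_cycle3 hβ (allObs_cycle3 hβ h)))))
            huC huD hC hD
          exact Or.inr (finish c1 c2 c3 c4)
        · refine Or.inl ?_
          rintro S T hS hT hne hPS hPT
          rcases hS with rfl | rfl | rfl | rfl <;> rcases hT with rfl | rfl | rfl | rfl <;>
            first
              | exact hne rfl
              | exact pa hPT | exact pb hPT | exact pd hPT
              | exact pa hPS | exact pb hPS | exact pd hPS
      · refine Or.inl ?_
        rintro S T hS hT hne hPS hPT
        rcases hS with rfl | rfl | rfl | rfl <;> rcases hT with rfl | rfl | rfl | rfl <;>
          first
            | exact hne rfl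
            | exact pa hPT | exact pb hPT | exact pc hPT
            | exact pa hPS | exact pb hPS | exact pc hPS
end

section
/- Let G be a connected circle graph and β a chordal solution to its Naji system. Then, up to equivalence, there is a unique oriented chord diagram 𝒞 for G with β_𝒞 = β; that is, any two oriented chord diagrams representing G whose induced Naji solutions both equal β have the same cyclic encoding (the clockwise cyclic sequence of labelled chord-ends, each end marked head or tail, is the same up to rotation). -/
/-- Cyclic betweenness on `Fin m`: `k` lies strictly inside the clockwise arc
from `p` to `q`. -/
def cycBtw {m : ℕ} (p k q : Fin m) : Prop :=
  if p < q then p < k ∧ k < q else p < k ∨ k < q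

/-- An oriented chord diagram for `G`: a cyclic double occurrence word on the
vertex set (each vertex appears exactly twice, once marked as head and once as
tail), with two vertices adjacent iff their occurrences interleave. -/
structure OCD {V : Type*} [Fintype V] [DecidableEq V] (G : SimpleGraph V) where
  word : Fin (2 * Fintype.card V) → V
  isHead : Fin (2 * Fintype.card V) → Bool
  occ_two : ∀ v : V, (Finset.univ.filter fun i => word i = v).card = 2
  head_one : ∀ v : V, (Finset.univ.filter fun i => word i = v ∧ isHead i = true).card = 1
  adj_iff : ∀ u v : V, u ≠ v →
    (G.Adj u v ↔ ∃ i j : Fin (2 * Fintype.card V), i < j ∧ word i = u ∧ word j = u ∧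
      (Finset.univ.filter fun k => word k = v ∧ i < k ∧ k < j).card = 1)

/-- The diagram `D` realizes `β`: `β u v = 0` exactly when the head of the chord
`v` is encountered travelling clockwise from the head of `u` to the tail of `u`. -/
def OCD.Realizes {V : Type*} [Fintype V] [DecidableEq V] {G : SimpleGraph V}
    (D : OCD G) (β : V → V → ZMod 2) : Prop :=
  ∀ u v : V, u ≠ v → ∀ hu tu hv : Fin (2 * Fintype.card V),
    D.word hu = u → D.isHead hu = true → D.word tu = u → D.isHead tu = false →
    D.word hv = v → D.isHead hv = true →
    (β u v = 0 ↔ cycBtw hu hv tu)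

/-- A solution `β` is chordal if some oriented chord diagram for `G` realizes it. -/
def NajiChordal {V : Type*} [Fintype V] [DecidableEq V] (G : SimpleGraph V)
    (β : V → V → ZMod 2) : Prop :=
  ∃ D : OCD G, D.Realizes β

/-- Two oriented chord diagrams are equivalent if their clockwise cyclic
encodings (labelled chord-ends, each marked head or tail) agree up to rotation. -/
def OCD.Equiv {V : Type*} [Fintype V] [DecidableEq V] {G : SimpleGraph V}
    (D₁ D₂ : OCD G) : Prop :=
  ∃ r : Fin (2 * Fintype.card V),
    ∀ i, D₂.word (i + r) = D₁.word i ∧ D₂.isHead (i + r) = D₁.isHead i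

/-! ### Auxiliary arithmetic: cyclic order via a base point -/

/-- Ternary cyclic order on natural-number coordinates. -/
def cyc3 (a b c : ℕ) : Prop := (a<b∧b<c)∨(b<c∧c<a)∨(c<a∧a<b)

instance : ∀ a b c, Decidable (cyc3 a b c) := fun _ _ _ => by unfold cyc3; infer_instance

/-- Clockwise distance from `p` to `k` on a circle of size `m`. -/
def dlt (m p k : ℕ) : ℕ := if p ≤ k then k - p else k + m - p

theorem dlt_lt {m p k : ℕ} (hp : p < m) (hk : k < m) : dlt m p k < m := by
  simp only [dlt]; split_ifs <;> omega

theorem dlt_inj {m p k k' : ℕ} (hp : p < m) (hk : k < m) (hk' : k' < m)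
    (h : dlt m p k = dlt m p k') : k = k' := by
  simp only [dlt] at h; split_ifs at h <;> omega

theorem dlt_pos {m p k : ℕ} (hp : p < m) (hk : k < m) (h : p ≠ k) : 0 < dlt m p k := by
  simp only [dlt]; split_ifs <;> omega

theorem dlt_self {m p : ℕ} : dlt m p p = 0 := by simp [dlt]

theorem cyc_coord {m : ℕ} (o a b c : Fin m) (hab : a ≠ b) (hac : a ≠ c) (hbc : b ≠ c) :
    cycBtw a b c ↔ cyc3 (dlt m o.1 a.1) (dlt m o.1 b.1) (dlt m o.1 c.1) := by
  have h1 := a.isLt; have h2 := b.isLt; have h3 := c.isLt; have h4 := o.isLt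
  have e1 : a.1 ≠ b.1 := fun h => hab (Fin.ext h)
  have e2 : a.1 ≠ c.1 := fun h => hac (Fin.ext h)
  have e3 : b.1 ≠ c.1 := fun h => hbc (Fin.ext h)
  simp only [cycBtw, cyc3, dlt, Fin.lt_def]
  split_ifs <;> omega

theorem mod_two_cases {m a : ℕ} (ha : a < 2 * m) :
    a % m = if a < m then a else a - m := by
  split_ifs with h
  · exact Nat.mod_eq_of_lt h
  · rw [Nat.mod_eq_sub_mod (by omega)]
    exact Nat.mod_eq_of_lt (by omega)

/-! ### Purely arithmetic determinacy lemmas -/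

theorem pairSide (x1 x2 w1 w2 : ℕ)
    (hd : x1≠x2 ∧ x1≠w1 ∧ x1≠w2 ∧ x2≠w1 ∧ x2≠w2 ∧ w1≠w2) :
    (cyc3 x1 w1 w2 ↔ ¬ cyc3 w1 x1 w2) ∧
    (cyc3 x2 w1 w2 ↔ ((cyc3 x1 w1 x2 ∧ ¬cyc3 w1 x1 w2 ∧ cyc3 x1 w2 x2) ∨
      (¬cyc3 x1 w1 x2 ∧ (¬cyc3 w1 x1 w2 ∨ cyc3 x1 w2 x2)))) := by
  simp only [cyc3]; omega

theorem crossSide (x1 x2 w1 w2 : ℕ)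
    (hd : x1≠x2 ∧ x1≠w1 ∧ x1≠w2 ∧ x2≠w1 ∧ x2≠w2 ∧ w1≠w2)
    (hx : cyc3 x1 w1 x2 ↔ ¬ cyc3 x1 w2 x2) :
    (cyc3 x1 w1 w2 ↔ ¬ cyc3 x2 w1 w2) := by
  simp only [cyc3] at *; omega

theorem locT (c z0 w1 w2 : ℕ)
    (h : 0<c ∧ 0<z0 ∧ w1≠c ∧ w2≠c ∧ w1≠z0 ∧ w2≠z0)
    (hw : w1 < w2) (hz : ¬ cyc3 z0 w1 w2) :
    ((w1 < c) ↔ (¬ cyc3 c w1 w2 ∨ z0 < c)) ∧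
    ((w2 < c) ↔ (cyc3 c w1 w2 ∧ z0 < c)) := by
  simp only [cyc3] at *; omega

theorem locF (c z1 w1 w2 : ℕ)
    (h : 0<c ∧ 0<z1 ∧ w1≠c ∧ w2≠c ∧ w1≠z1 ∧ w2≠z1 ∧ 0<w1 ∧ 0<w2)
    (hw : ¬ w1 < w2) (hz : cyc3 z1 w1 w2) :
    ((w1 < c) ↔ (¬ cyc3 c w1 w2 ∧ z1 < c)) ∧
    ((w2 < c) ↔ (cyc3 c w1 w2 ∨ z1 < c)) := by
  simp only [cyc3] at *; omega

/-! ### Finset helpers -/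

theorem card_filter_pair {α : Type*} [DecidableEq α] (P : α → Prop) [DecidablePred P]
    {a b : α} (h : a ≠ b) :
    (({a,b} : Finset α).filter P).card = 1 ↔ (P a ↔ ¬ P b) := by
  by_cases ha : P a <;> by_cases hb : P b <;>
    simp [Finset.filter_insert, Finset.filter_singleton, ha, hb, h,
      Finset.card_insert_of_notMem]

theorem btw_iff_gt {m : ℕ} {hu tu k : Fin m} (h1 : tu < hu) (hk1 : k ≠ hu) (hk2 : k ≠ tu) :
    (tu < k ∧ k < hu) ↔ ¬ cycBtw hu k tu := by
  have e1 : k.1 ≠ hu.1 := fun h => hk1 (Fin.ext h)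
  have e2 : k.1 ≠ tu.1 := fun h => hk2 (Fin.ext h)
  simp only [cycBtw, Fin.lt_def] at *
  split_ifs <;> omega

theorem rank_eq {α : Type*} [Fintype α] [DecidableEq α] (F : α → ℕ) (m : ℕ)
    (hinj : ∀ a b, F a = F b → a = b) (hlt : ∀ a, F a < m)
    (hsurj : ∀ j, j < m → ∃ a, F a = j) (a : α) :
    F a = (Finset.univ.filter fun b => F b < F a).card := by
  classical
  have : (Finset.univ.filter fun b => F b < F a).card = (Finset.range (F a)).card := by
    apply Finset.card_bij (fun b _ => F b)
    · intro b hb; rw [Finset.mem_range]; exact (Finset.mem_filter.mp hb).2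
    · intro b _ c _ h; exact hinj b c h
    · intro j hj
      rw [Finset.mem_range] at hj
      obtain ⟨b, hbj⟩ := hsurj j (lt_trans hj (hlt a))
      exact ⟨b, Finset.mem_filter.mpr ⟨Finset.mem_univ _, by omega⟩, hbj⟩
  rw [this, Finset.card_range]

theorem walk_bdry {V : Type*} {G : SimpleGraph V} [DecidableEq V] {S : Finset V} :
    ∀ {a b : V}, G.Walk a b → a ∈ S → b ∉ S → ∃ v ∈ S, ∃ w, w ∉ S ∧ G.Adj v w := by
  intro a b p
  induction p with
  | nil => intro h1 h2; exact absurd h1 h2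
  | @cons u x y hadj p ih =>
      intro h1 h2
      by_cases hx : x ∈ S
      · exact ih hx h2
      · exact ⟨u, h1, x, hx, hadj⟩

/-! ### Diagram infrastructure -/

namespace OCD

variable {V : Type*} [Fintype V] [DecidableEq V] {G : SimpleGraph V} (D : OCD G)

theorem exists_E : ∃ E : V → Bool → Fin (2 * Fintype.card V),
    (∀ v b, D.word (E v b) = v ∧ D.isHead (E v b) = b) ∧
    (∀ i, i = E (D.word i) (D.isHead i)) := by
  have key : ∀ v : V, ∃ h t : Fin (2 * Fintype.card V), D.word h = v ∧ D.isHead h = true ∧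
      D.word t = v ∧ D.isHead t = false ∧
      (∀ i, D.word i = v → D.isHead i = true → i = h) ∧
      (∀ i, D.word i = v → D.isHead i = false → i = t) := by
    intro v
    obtain ⟨h, hh⟩ := Finset.card_eq_one.mp (D.head_one v)
    have hmem : h ∈ Finset.univ.filter fun i => D.word i = v ∧ D.isHead i = true := by
      rw [hh]; exact Finset.mem_singleton_self h
    rw [Finset.mem_filter] at hmem
    obtain ⟨a, b, hab, hs⟩ := Finset.card_eq_two.mp (D.occ_two v)
    have ha : D.word a = v := by
      have : a ∈ Finset.univ.filter fun i => D.word i = v := by rw [hs]; simp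
      exact (Finset.mem_filter.mp this).2
    have hb : D.word b = v := by
      have : b ∈ Finset.univ.filter fun i => D.word i = v := by rw [hs]; simp
      exact (Finset.mem_filter.mp this).2
    have hmem2 : h ∈ ({a, b} : Finset _) := by
      rw [← hs, Finset.mem_filter]; exact ⟨Finset.mem_univ _, hmem.2.1⟩
    have huniq : ∀ i, D.word i = v → D.isHead i = true → i = h := by
      intro i hiw hih
      have : i ∈ Finset.univ.filter fun j => D.word j = v ∧ D.isHead j = true := by
        rw [Finset.mem_filter]; exact ⟨Finset.mem_univ _, hiw, hih⟩
      rw [hh, Finset.mem_singleton] at this; exact this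
    rcases Finset.mem_insert.mp hmem2 with h1 | h1
    · refine ⟨h, b, hmem.2.1, hmem.2.2, hb, ?_, huniq, ?_⟩
      · cases hbh : D.isHead b
        · rfl
        · exact absurd (huniq b hb hbh ▸ h1) (by subst h1; exact fun hh' => hab hh'.symm)
      · intro i hiw hih
        have : i ∈ ({a, b} : Finset _) := by
          rw [← hs, Finset.mem_filter]; exact ⟨Finset.mem_univ _, hiw⟩
        rcases Finset.mem_insert.mp this with h2 | h2
        · exfalso; rw [h2, ← h1] at hih; rw [hmem.2.2] at hih; simp at hih
        · exact Finset.mem_singleton.mp h2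
    · rw [Finset.mem_singleton] at h1
      refine ⟨h, a, hmem.2.1, hmem.2.2, ha, ?_, huniq, ?_⟩
      · cases hah : D.isHead a
        · rfl
        · exact absurd (huniq a ha hah) (fun he => hab (he.trans h1))
      · intro i hiw hih
        have : i ∈ ({a, b} : Finset _) := by
          rw [← hs, Finset.mem_filter]; exact ⟨Finset.mem_univ _, hiw⟩
        rcases Finset.mem_insert.mp this with h2 | h2
        · exact h2
        · exfalso; rw [Finset.mem_singleton] at h2; rw [h2, ← h1] at hih
          rw [hmem.2.2] at hih; simp at hih
  choose hv tv hw hhd tw thd hu tu using key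
  refine ⟨fun v b => if b then hv v else tv v, ?_, ?_⟩
  · intro v b; cases b <;> simp [hw, hhd, tw, thd]
  · intro i
    cases hih : D.isHead i
    · simp only [if_neg (Bool.false_ne_true)]
      exact tu (D.word i) i rfl hih
    · simp only [if_pos rfl]
      exact hu (D.word i) i rfl hih

theorem word_filter_eq {E : V → Bool → Fin (2 * Fintype.card V)}
    (hE : ∀ v b, D.word (E v b) = v ∧ D.isHead (E v b) = b) (v : V) :
    Finset.univ.filter (fun i => D.word i = v) = {E v true, E v false} := by
  have hne : E v true ≠ E v false := fun h => by
    have h1 := (hE v true).2; have h2 := (hE v false).2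
    rw [h, h2] at h1; simp at h1
  apply Finset.eq_of_superset_of_card_ge
  · intro i hi
    rcases Finset.mem_insert.mp hi with h | h
    · subst h; simp [Finset.mem_filter, (hE v true).1]
    · rw [Finset.mem_singleton] at h; subst h; simp [Finset.mem_filter, (hE v false).1]
  · rw [D.occ_two v, Finset.card_insert_of_notMem (by simpa using hne), Finset.card_singleton]

theorem adj_xor {E : V → Bool → Fin (2 * Fintype.card V)}
    (hE : ∀ v b, D.word (E v b) = v ∧ D.isHead (E v b) = b)
    {u x : V} (hux : u ≠ x) :
    (G.Adj u x ↔ (cycBtw (E u true) (E x true) (E u false) ↔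
      ¬ cycBtw (E u true) (E x false) (E u false))) := by
  set hu := E u true with hhu
  set tu := E u false with htu
  set hx := E x true with hhx
  set tx := E x false with htx
  have wne : ∀ b b', (E u b) ≠ (E x b') := by
    intro b b' h
    exact hux (((hE u b).1.symm.trans (by rw [h])).trans (hE x b').1)
  have hne : hu ≠ tu := fun h => by
    have h1 := (hE u true).2; have h2 := (hE u false).2
    rw [← hhu, ← htu] at *; rw [h, h2] at h1; simp at h1
  have hxne : hx ≠ tx := fun h => by
    have h1 := (hE x true).2; have h2 := (hE x false).2
    rw [← hhx, ← htx] at *; rw [h, h2] at h1; simp at h1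
  have hfilter : ∀ i j : Fin (2 * Fintype.card V),
      (Finset.univ.filter fun k => D.word k = x ∧ i < k ∧ k < j) =
      ({hx, tx} : Finset _).filter (fun k => i < k ∧ k < j) := by
    intro i j
    rw [← D.word_filter_eq hE x]
    ext k
    simp [Finset.mem_filter, and_assoc]
  rw [D.adj_iff u x hux]
  constructor
  · rintro ⟨i, j, hij, hwi, hwj, hcard⟩
    have hi : i ∈ ({hu, tu} : Finset _) := by
      rw [← D.word_filter_eq hE u, Finset.mem_filter]; exact ⟨Finset.mem_univ _, hwi⟩
    have hj : j ∈ ({hu, tu} : Finset _) := by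
      rw [← D.word_filter_eq hE u, Finset.mem_filter]; exact ⟨Finset.mem_univ _, hwj⟩
    rw [hfilter i j, card_filter_pair _ hxne] at hcard
    simp only [Finset.mem_insert, Finset.mem_singleton] at hi hj
    rcases hi with hi | hi <;> rcases hj with hj | hj
    · exfalso; rw [hi, hj] at hij; exact lt_irrefl _ hij
    · subst hi; subst hj
      have b1 : (hu < hx ∧ hx < tu) ↔ cycBtw hu hx tu := by simp only [cycBtw, if_pos hij]
      have b2 : (hu < tx ∧ tx < tu) ↔ cycBtw hu tx tu := by simp only [cycBtw, if_pos hij]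
      rw [b1, b2] at hcard; exact hcard
    · subst hi; subst hj
      have b1 := btw_iff_gt hij (wne true true).symm (wne false true).symm
      have b2 := btw_iff_gt hij (wne true false).symm (wne false false).symm
      rw [b1, b2] at hcard; tauto
    · exfalso; rw [hi, hj] at hij; exact lt_irrefl _ hij
  · intro hiff
    rcases lt_or_gt_of_ne hne with hlt | hgt
    · refine ⟨hu, tu, hlt, (hE u true).1, (hE u false).1, ?_⟩
      rw [hfilter, card_filter_pair _ hxne]
      have b1 : (hu < hx ∧ hx < tu) ↔ cycBtw hu hx tu := by simp only [cycBtw, if_pos hlt]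
      have b2 : (hu < tx ∧ tx < tu) ↔ cycBtw hu tx tu := by simp only [cycBtw, if_pos hlt]
      rw [b1, b2]; exact hiff
    · refine ⟨tu, hu, hgt, (hE u false).1, (hE u true).1, ?_⟩
      rw [hfilter, card_filter_pair _ hxne]
      have b1 := btw_iff_gt hgt (wne true true).symm (wne false true).symm
      have b2 := btw_iff_gt hgt (wne true false).symm (wne false false).symm
      rw [b1, b2]; tauto

end OCD

theorem abstract_key {V : Type*} [Fintype V] [DecidableEq V] (G : SimpleGraph V)
    (hconn : G.Connected) (v₀ : V) (f g : V × Bool → ℕ)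
    (hfinj : ∀ a b, f a = f b → a = b) (hginj : ∀ a b, g a = g b → a = b)
    (hf0 : f (v₀, true) = 0) (hg0 : g (v₀, true) = 0)
    (hfpos : ∀ a, a ≠ (v₀, true) → 0 < f a) (hgpos : ∀ a, a ≠ (v₀, true) → 0 < g a)
    (side : ∀ x w : V, x ≠ w →
      ((cyc3 (f (x,true)) (f (w,true)) (f (w,false)) ↔ cyc3 (g (x,true)) (g (w,true)) (g (w,false))) ∧
       (cyc3 (f (x,false)) (f (w,true)) (f (w,false)) ↔ cyc3 (g (x,false)) (g (w,true)) (g (w,false)))))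
    (crossf : ∀ v w : V, G.Adj v w →
      (cyc3 (f (v,true)) (f (w,true)) (f (w,false)) ↔ ¬ cyc3 (f (v,false)) (f (w,true)) (f (w,false))))
    (crossg : ∀ v w : V, G.Adj v w →
      (cyc3 (g (v,true)) (g (w,true)) (g (w,false)) ↔ ¬ cyc3 (g (v,false)) (g (w,true)) (g (w,false)))) :
    ∀ a b : V × Bool, (f a < f b ↔ g a < g b) := by
  classical
  have fne : ∀ a b : V × Bool, a ≠ b → f a ≠ f b := fun a b hab h => hab (hfinj _ _ h)
  have gne : ∀ a b : V × Bool, a ≠ b → g a ≠ g b := fun a b hab h => hab (hginj _ _ h)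
  have flip : ∀ a b : V × Bool, a ≠ b → (f a < f b ↔ g a < g b) → (f b < f a ↔ g b < g a) := by
    intro a b hab h
    have h1 := fne a b hab; have h2 := gne a b hab; omega
  -- the induction step
  have step : ∀ (S : Finset V) (w : V), v₀ ∈ S → w ∉ S →
      (∀ a b : V × Bool, a.1 ∈ S → b.1 ∈ S → (f a < f b ↔ g a < g b)) →
      (∃ v ∈ S, G.Adj v w) →
      ∀ a b : V × Bool, a.1 ∈ insert w S → b.1 ∈ insert w S → (f a < f b ↔ g a < g b) := by
    intro S w hv₀S hwS hIH hex
    have hwv₀ : w ≠ v₀ := fun h => hwS (h ▸ hv₀S)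
    -- determinacy of the base bit
    have hTdet : cyc3 0 (f (w,true)) (f (w,false)) ↔ cyc3 0 (g (w,true)) (g (w,false)) := by
      have := (side v₀ w (fun h => hwS (h ▸ hv₀S))).1
      rwa [hf0, hg0] at this
    have pwT : 0 < f (w, true) := hfpos _ (by simp [hwv₀])
    have pwF : 0 < f (w, false) := hfpos _ (by simp)
    have qwT : 0 < g (w, true) := hgpos _ (by simp [hwv₀])
    have qwF : 0 < g (w, false) := hgpos _ (by simp)
    have pww : f (w,true) ≠ f (w,false) := fne _ _ (by simp)
    have qww : g (w,true) ≠ g (w,false) := gne _ _ (by simp)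
    -- head vs tail of w
    have hww : f (w,true) < f (w,false) ↔ g (w,true) < g (w,false) := by
      simp only [cyc3] at hTdet; omega
    -- the main comparison
    have main : ∀ (e : Bool) (b : V × Bool), b.1 ∈ S → (f (w,e) < f b ↔ g (w,e) < g b) := by
      intro e b hbS
      by_cases hb0 : b = (v₀, true)
      · subst hb0
        have h1 : 0 < f (w, e) := hfpos _ (by simp [hwv₀])
        have h2 : 0 < g (w, e) := hgpos _ (by simp [hwv₀])
        omega
      · obtain ⟨v, hvS, hadj⟩ := hex
        have hvw : v ≠ w := fun h => hwS (h ▸ hvS)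
        have hbw : b.1 ≠ w := fun h => hwS (h ▸ hbS)
        obtain ⟨bv, bb⟩ := b
        simp only at hbw
        have hbne : ∀ e' : Bool, (bv, bb) ≠ (w, e') := by
          intro e' h; exact hbw (congrArg Prod.fst h)
        have pc : 0 < f (bv, bb) := hfpos _ hb0
        have qc : 0 < g (bv, bb) := hgpos _ hb0
        have pcw1 : f (w,true) ≠ f (bv,bb) := fne _ _ (fun h => hbw (congrArg Prod.fst h.symm))
        have pcw2 : f (w,false) ≠ f (bv,bb) := fne _ _ (fun h => hbw (congrArg Prod.fst h.symm))
        have qcw1 : g (w,true) ≠ g (bv,bb) := gne _ _ (fun h => hbw (congrArg Prod.fst h.symm))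
        have qcw2 : g (w,false) ≠ g (bv,bb) := gne _ _ (fun h => hbw (congrArg Prod.fst h.symm))
        have pvw1T : f (w,true) ≠ f (v,true) := fne _ _ (fun h => hvw (congrArg Prod.fst h).symm)
        have pvw2T : f (w,false) ≠ f (v,true) := fne _ _ (fun h => hvw (congrArg Prod.fst h).symm)
        have pvw1F : f (w,true) ≠ f (v,false) := fne _ _ (fun h => hvw (congrArg Prod.fst h).symm)
        have pvw2F : f (w,false) ≠ f (v,false) := fne _ _ (fun h => hvw (congrArg Prod.fst h).symm)
        have qvw1T : g (w,true) ≠ g (v,true) := gne _ _ (fun h => hvw (congrArg Prod.fst h).symm)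
        have qvw2T : g (w,false) ≠ g (v,true) := gne _ _ (fun h => hvw (congrArg Prod.fst h).symm)
        have qvw1F : g (w,true) ≠ g (v,false) := gne _ _ (fun h => hvw (congrArg Prod.fst h).symm)
        have qvw2F : g (w,false) ≠ g (v,false) := gne _ _ (fun h => hvw (congrArg Prod.fst h).symm)
        -- side determinacy for b and for v
        have hsb : cyc3 (f (bv,bb)) (f (w,true)) (f (w,false)) ↔
            cyc3 (g (bv,bb)) (g (w,true)) (g (w,false)) := by
          cases bb
          · exact (side bv w hbw).2
          · exact (side bv w hbw).1
        have hsvT : cyc3 (f (v,true)) (f (w,true)) (f (w,false)) ↔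
            cyc3 (g (v,true)) (g (w,true)) (g (w,false)) := (side v w hvw).1
        have hsvF : cyc3 (f (v,false)) (f (w,true)) (f (w,false)) ↔
            cyc3 (g (v,false)) (g (w,true)) (g (w,false)) := (side v w hvw).2
        have hcf := crossf v w hadj
        have hcg := crossg v w hadj
        -- comparison of anchor with b (from IH)
        have hzT : f (v,true) < f (bv,bb) ↔ g (v,true) < g (bv,bb) := hIH _ _ hvS hbS
        have hzF : f (v,false) < f (bv,bb) ↔ g (v,false) < g (bv,bb) := hIH _ _ hvS hbS
        have pzF : 0 < f (v,false) := hfpos _ (by simp)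
        have qzF : 0 < g (v,false) := hgpos _ (by simp)
        by_cases hT : cyc3 0 (f (w,true)) (f (w,false))
        · have hTg : cyc3 0 (g (w,true)) (g (w,false)) := hTdet.mp hT
          have hw12 : f (w,true) < f (w,false) := by simp only [cyc3] at hT; omega
          have hw12g : g (w,true) < g (w,false) := by simp only [cyc3] at hTg; omega
          by_cases hsv : cyc3 (f (v,true)) (f (w,true)) (f (w,false))
          · -- anchor z0 = (v,false)
            have hz0f : ¬ cyc3 (f (v,false)) (f (w,true)) (f (w,false)) := hcf.mp hsv
            have hz0g : ¬ cyc3 (g (v,false)) (g (w,true)) (g (w,false)) :=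
              hcg.mp (hsvT.mp hsv)
            have lf := locT (f (bv,bb)) (f (v,false)) (f (w,true)) (f (w,false))
              ⟨pc, pzF, pcw1, pcw2, pvw1F, pvw2F⟩ hw12 hz0f
            have lg := locT (g (bv,bb)) (g (v,false)) (g (w,true)) (g (w,false))
              ⟨qc, qzF, qcw1, qcw2, qvw1F, qvw2F⟩ hw12g hz0g
            cases e
            · rw [lf.2, lg.2, hsb, hzF]
            · rw [lf.1, lg.1, hsb, hzF]
          · -- anchor z0 = (v,true)
            have hvv₀ : (v, true) ≠ (v₀, true) := by
              intro h; apply hsv; rw [h, hf0]; exact hT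
            have pzT : 0 < f (v,true) := hfpos _ hvv₀
            have qzT : 0 < g (v,true) := hgpos _ hvv₀
            have hz0g : ¬ cyc3 (g (v,true)) (g (w,true)) (g (w,false)) :=
              fun h => hsv (hsvT.mpr h)
            have lf := locT (f (bv,bb)) (f (v,true)) (f (w,true)) (f (w,false))
              ⟨pc, pzT, pcw1, pcw2, pvw1T, pvw2T⟩ hw12 hsv
            have lg := locT (g (bv,bb)) (g (v,true)) (g (w,true)) (g (w,false))
              ⟨qc, qzT, qcw1, qcw2, qvw1T, qvw2T⟩ hw12g hz0g
            cases e
            · rw [lf.2, lg.2, hsb, hzT]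
            · rw [lf.1, lg.1, hsb, hzT]
        · have hTg : ¬ cyc3 0 (g (w,true)) (g (w,false)) := fun h => hT (hTdet.mpr h)
          have hw12 : ¬ f (w,true) < f (w,false) := by
            intro h; apply hT; simp only [cyc3]; omega
          have hw12g : ¬ g (w,true) < g (w,false) := by
            intro h; apply hTg; simp only [cyc3]; omega
          by_cases hsv : cyc3 (f (v,true)) (f (w,true)) (f (w,false))
          · -- anchor z1 = (v,true)
            have hvv₀ : (v, true) ≠ (v₀, true) := by
              intro h; apply hT; rw [h, hf0] at hsv; exact hsv
            have pzT : 0 < f (v,true) := hfpos _ hvv₀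
            have qzT : 0 < g (v,true) := hgpos _ hvv₀
            have hz1g : cyc3 (g (v,true)) (g (w,true)) (g (w,false)) := hsvT.mp hsv
            have lf := locF (f (bv,bb)) (f (v,true)) (f (w,true)) (f (w,false))
              ⟨pc, pzT, pcw1, pcw2, pvw1T, pvw2T, pwT, pwF⟩ hw12 hsv
            have lg := locF (g (bv,bb)) (g (v,true)) (g (w,true)) (g (w,false))
              ⟨qc, qzT, qcw1, qcw2, qvw1T, qvw2T, qwT, qwF⟩ hw12g hz1g
            cases e
            · rw [lf.2, lg.2, hsb, hzT]
            · rw [lf.1, lg.1, hsb, hzT]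
          · -- anchor z1 = (v,false)
            have hz1f : cyc3 (f (v,false)) (f (w,true)) (f (w,false)) := by
              by_contra h; exact hsv (hcf.mpr h)
            have hz1g : cyc3 (g (v,false)) (g (w,true)) (g (w,false)) := hsvF.mp hz1f
            have lf := locF (f (bv,bb)) (f (v,false)) (f (w,true)) (f (w,false))
              ⟨pc, pzF, pcw1, pcw2, pvw1F, pvw2F, pwT, pwF⟩ hw12 hz1f
            have lg := locF (g (bv,bb)) (g (v,false)) (g (w,true)) (g (w,false))
              ⟨qc, qzF, qcw1, qcw2, qvw1F, qvw2F, qwT, qwF⟩ hw12g hz1g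
            cases e
            · rw [lf.2, lg.2, hsb, hzF]
            · rw [lf.1, lg.1, hsb, hzF]
    -- assemble the step
    intro a b ha hb
    rcases Finset.mem_insert.mp ha with ha1 | ha1 <;> rcases Finset.mem_insert.mp hb with hb1 | hb1
    · -- a.1 = w, b.1 = w
      obtain ⟨av, ab⟩ := a; obtain ⟨bv, bb⟩ := b
      simp only at ha1 hb1; subst ha1; subst hb1
      cases ab <;> cases bb
      · omega
      · exact flip _ _ (by simp) hww
      · exact hww
      · omega
    · obtain ⟨av, ab⟩ := a
      simp only at ha1; subst ha1
      exact main ab b hb1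
    · obtain ⟨bv, bb⟩ := b
      simp only at hb1; subst hb1
      refine flip _ _ (fun h => hwS ?_) (main bb a ha1)
      have h' : bv = a.1 := congrArg Prod.fst h
      rw [h']; exact ha1
    · exact hIH a b ha1 hb1
  -- the induction
  have grow : ∀ (k : ℕ) (S : Finset V), v₀ ∈ S →
      (∀ a b : V × Bool, a.1 ∈ S → b.1 ∈ S → (f a < f b ↔ g a < g b)) →
      Fintype.card V ≤ S.card + k →
      ∀ a b : V × Bool, (f a < f b ↔ g a < g b) := by
    intro k
    induction k with
    | zero =>
      intro S hv hInv hcard a b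
      have hS : S = Finset.univ := by
        apply Finset.eq_univ_of_card
        have := Finset.card_le_univ S
        omega
      exact hInv a b (by rw [hS]; exact Finset.mem_univ _) (by rw [hS]; exact Finset.mem_univ _)
    | succ k ih =>
      intro S hv hInv hcard
      by_cases huniv : S = Finset.univ
      · intro a b
        exact hInv a b (by rw [huniv]; exact Finset.mem_univ _) (by rw [huniv]; exact Finset.mem_univ _)
      · have hex : ∃ x, x ∉ S := by
          by_contra h; push_neg at h
          exact huniv (Finset.eq_univ_iff_forall.mpr h)
        obtain ⟨x, hx⟩ := hex
        obtain ⟨p⟩ := hconn.preconnected v₀ x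
        obtain ⟨v, hvS, w, hwS, hadj⟩ := walk_bdry p hv hx
        apply ih (insert w S) (Finset.mem_insert_of_mem hv)
          (step S w hv hwS hInv ⟨v, hvS, hadj⟩)
        rw [Finset.card_insert_of_notMem hwS]
        omega
  -- base case on {v₀}
  intro a b
  refine grow (Fintype.card V) {v₀} (Finset.mem_singleton_self v₀) ?_ (by omega) a b
  intro c d hc hd
  obtain ⟨cv, cb⟩ := c; obtain ⟨dv, db⟩ := d
  simp only [Finset.mem_singleton] at hc hd
  rw [hc, hd]
  have h1 : 0 < f (v₀, false) := hfpos _ (by simp)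
  have h2 : 0 < g (v₀, false) := hgpos _ (by simp)
  cases cb <;> cases db <;> omega
set_option maxHeartbeats 2000000 in
/-- For a connected graph, a chordal Naji solution is realized by a unique
oriented chord diagram up to equivalence. -/
theorem naji_unique_diagram {V : Type*} [Fintype V] [DecidableEq V]
    (G : SimpleGraph V) (hconn : G.Connected) (hcard : 2 ≤ Fintype.card V)
    (β : V → V → ZMod 2) (D₁ D₂ : OCD G)
    (h₁ : D₁.Realizes β) (h₂ : D₂.Realizes β) :
    D₁.Equiv D₂ := by
  classical
  obtain ⟨E₁, hE₁, hC₁⟩ := D₁.exists_E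
  obtain ⟨E₂, hE₂, hC₂⟩ := D₂.exists_E
  have hm : 0 < 2 * Fintype.card V := by omega
  have hV : Nonempty V := by rw [← Fintype.card_pos_iff]; omega
  obtain ⟨v₀⟩ := hV
  have Einj₁ : ∀ a b : V × Bool, E₁ a.1 a.2 = E₁ b.1 b.2 → a = b := by
    intro a b h
    have h1 : a.1 = b.1 := by rw [← (hE₁ a.1 a.2).1, h, (hE₁ b.1 b.2).1]
    have h2 : a.2 = b.2 := by rw [← (hE₁ a.1 a.2).2, h, (hE₁ b.1 b.2).2]
    exact Prod.ext h1 h2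
  have Einj₂ : ∀ a b : V × Bool, E₂ a.1 a.2 = E₂ b.1 b.2 → a = b := by
    intro a b h
    have h1 : a.1 = b.1 := by rw [← (hE₂ a.1 a.2).1, h, (hE₂ b.1 b.2).1]
    have h2 : a.2 = b.2 := by rw [← (hE₂ a.1 a.2).2, h, (hE₂ b.1 b.2).2]
    exact Prod.ext h1 h2
  have Ene₁ : ∀ a b : V × Bool, a ≠ b → E₁ a.1 a.2 ≠ E₁ b.1 b.2 :=
    fun a b hab h => hab (Einj₁ a b h)
  have Ene₂ : ∀ a b : V × Bool, a ≠ b → E₂ a.1 a.2 ≠ E₂ b.1 b.2 :=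
    fun a b hab h => hab (Einj₂ a b h)
  set f : V × Bool → ℕ := fun a => dlt (2 * Fintype.card V) (E₁ v₀ true).1 (E₁ a.1 a.2).1 with hf
  set g : V × Bool → ℕ := fun a => dlt (2 * Fintype.card V) (E₂ v₀ true).1 (E₂ a.1 a.2).1 with hg
  have hfinj : ∀ a b : V × Bool, f a = f b → a = b := by
    intro a b h
    simp only [hf] at h
    exact Einj₁ a b (Fin.ext (dlt_inj (E₁ v₀ true).isLt (E₁ a.1 a.2).isLt (E₁ b.1 b.2).isLt h))
  have hginj : ∀ a b : V × Bool, g a = g b → a = b := by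
    intro a b h
    simp only [hg] at h
    exact Einj₂ a b (Fin.ext (dlt_inj (E₂ v₀ true).isLt (E₂ a.1 a.2).isLt (E₂ b.1 b.2).isLt h))
  have fne : ∀ a b : V × Bool, a ≠ b → f a ≠ f b := fun a b hab h => hab (hfinj a b h)
  have gne : ∀ a b : V × Bool, a ≠ b → g a ≠ g b := fun a b hab h => hab (hginj a b h)
  have hf0 : f (v₀, true) = 0 := by simp only [hf]; exact dlt_self
  have hg0 : g (v₀, true) = 0 := by simp only [hg]; exact dlt_self
  have hfpos : ∀ a : V × Bool, a ≠ (v₀, true) → 0 < f a := by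
    intro a ha
    simp only [hf]
    refine dlt_pos (E₁ v₀ true).isLt (E₁ a.1 a.2).isLt ?_
    intro h
    exact ha (Einj₁ ((v₀, true) : V × Bool) a (Fin.ext h)).symm
  have hgpos : ∀ a : V × Bool, a ≠ (v₀, true) → 0 < g a := by
    intro a ha
    simp only [hg]
    refine dlt_pos (E₂ v₀ true).isLt (E₂ a.1 a.2).isLt ?_
    intro h
    exact ha (Einj₂ ((v₀, true) : V × Bool) a (Fin.ext h)).symm
  have hflt : ∀ a : V × Bool, f a < (2 * Fintype.card V) := by
    intro a; simp only [hf]; exact dlt_lt (E₁ v₀ true).isLt (E₁ a.1 a.2).isLt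
  have hglt : ∀ a : V × Bool, g a < (2 * Fintype.card V) := by
    intro a; simp only [hg]; exact dlt_lt (E₂ v₀ true).isLt (E₂ a.1 a.2).isLt
  have hfsurj : ∀ j, j < (2 * Fintype.card V) → ∃ a : V × Bool, f a = j := by
    intro j hj
    have hxlt : ((E₁ v₀ true).1 + j) % (2 * Fintype.card V) < (2 * Fintype.card V) := Nat.mod_lt _ hm
    refine ⟨(D₁.word ⟨((E₁ v₀ true).1 + j) % (2 * Fintype.card V), hxlt⟩,
             D₁.isHead ⟨((E₁ v₀ true).1 + j) % (2 * Fintype.card V), hxlt⟩), ?_⟩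
    simp only [hf]
    show dlt (2 * Fintype.card V) (E₁ v₀ true).1
      (E₁ (D₁.word ⟨((E₁ v₀ true).1 + j) % (2 * Fintype.card V), hxlt⟩)
          (D₁.isHead ⟨((E₁ v₀ true).1 + j) % (2 * Fintype.card V), hxlt⟩)).1 = j
    rw [← hC₁ ⟨((E₁ v₀ true).1 + j) % (2 * Fintype.card V), hxlt⟩]
    show dlt (2 * Fintype.card V) (E₁ v₀ true).1 (((E₁ v₀ true).1 + j) % (2 * Fintype.card V)) = j
    have h2 := (E₁ v₀ true).isLt
    rw [mod_two_cases (by omega)]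
    simp only [dlt]; split_ifs <;> omega
  have hgsurj : ∀ j, j < (2 * Fintype.card V) → ∃ a : V × Bool, g a = j := by
    intro j hj
    have hxlt : ((E₂ v₀ true).1 + j) % (2 * Fintype.card V) < (2 * Fintype.card V) := Nat.mod_lt _ hm
    refine ⟨(D₂.word ⟨((E₂ v₀ true).1 + j) % (2 * Fintype.card V), hxlt⟩,
             D₂.isHead ⟨((E₂ v₀ true).1 + j) % (2 * Fintype.card V), hxlt⟩), ?_⟩
    simp only [hg]
    show dlt (2 * Fintype.card V) (E₂ v₀ true).1
      (E₂ (D₂.word ⟨((E₂ v₀ true).1 + j) % (2 * Fintype.card V), hxlt⟩)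
          (D₂.isHead ⟨((E₂ v₀ true).1 + j) % (2 * Fintype.card V), hxlt⟩)).1 = j
    rw [← hC₂ ⟨((E₂ v₀ true).1 + j) % (2 * Fintype.card V), hxlt⟩]
    show dlt (2 * Fintype.card V) (E₂ v₀ true).1 (((E₂ v₀ true).1 + j) % (2 * Fintype.card V)) = j
    have h2 := (E₂ v₀ true).isLt
    rw [mod_two_cases (by omega)]
    simp only [dlt]; split_ifs <;> omega
  -- bridging to cyc3 coordinates
  have co₁ : ∀ a b c : V × Bool, a ≠ b → a ≠ c → b ≠ c →
      (cycBtw (E₁ a.1 a.2) (E₁ b.1 b.2) (E₁ c.1 c.2) ↔ cyc3 (f a) (f b) (f c)) := by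
    intro a b c h1 h2 h3
    simp only [hf]
    exact cyc_coord (E₁ v₀ true) _ _ _ (Ene₁ a b h1) (Ene₁ a c h2) (Ene₁ b c h3)
  have co₂ : ∀ a b c : V × Bool, a ≠ b → a ≠ c → b ≠ c →
      (cycBtw (E₂ a.1 a.2) (E₂ b.1 b.2) (E₂ c.1 c.2) ↔ cyc3 (g a) (g b) (g c)) := by
    intro a b c h1 h2 h3
    simp only [hg]
    exact cyc_coord (E₂ v₀ true) _ _ _ (Ene₂ a b h1) (Ene₂ a c h2) (Ene₂ b c h3)
  have hβ₁ : ∀ u x : V, u ≠ x → (β u x = 0 ↔ cycBtw (E₁ u true) (E₁ x true) (E₁ u false)) :=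
    fun u x hux => h₁ u x hux (E₁ u true) (E₁ u false) (E₁ x true)
      (hE₁ u true).1 (hE₁ u true).2 (hE₁ u false).1 (hE₁ u false).2
      (hE₁ x true).1 (hE₁ x true).2
  have hβ₂ : ∀ u x : V, u ≠ x → (β u x = 0 ↔ cycBtw (E₂ u true) (E₂ x true) (E₂ u false)) :=
    fun u x hux => h₂ u x hux (E₂ u true) (E₂ u false) (E₂ x true)
      (hE₂ u true).1 (hE₂ u true).2 (hE₂ u false).1 (hE₂ u false).2
      (hE₂ x true).1 (hE₂ x true).2
  have raw1 : ∀ u x : V, u ≠ x →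
      (cyc3 (f (u,true)) (f (x,true)) (f (u,false)) ↔
       cyc3 (g (u,true)) (g (x,true)) (g (u,false))) := by
    intro u x hux
    have b1 := hβ₁ u x hux
    have b2 := hβ₂ u x hux
    have c1 := co₁ (u,true) (x,true) (u,false)
      (by simp [hux]) (by simp) (by simp [Ne, Prod.ext_iff, hux, hux.symm])
    have c2 := co₂ (u,true) (x,true) (u,false)
      (by simp [hux]) (by simp) (by simp [Ne, Prod.ext_iff, hux, hux.symm])
    exact ((c1.symm.trans b1.symm).trans b2).trans c2
  have adjx₁ : ∀ u x : V, u ≠ x → (G.Adj u x ↔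
      (cyc3 (f (u,true)) (f (x,true)) (f (u,false)) ↔
       ¬ cyc3 (f (u,true)) (f (x,false)) (f (u,false)))) := by
    intro u x hux
    have hx := D₁.adj_xor hE₁ hux
    have c1 := co₁ (u,true) (x,true) (u,false)
      (by simp [hux]) (by simp) (by simp [Ne, Prod.ext_iff, hux, hux.symm])
    have c3 := co₁ (u,true) (x,false) (u,false)
      (by simp [Ne, Prod.ext_iff, hux, hux.symm]) (by simp) (by simp [Ne, Prod.ext_iff, hux, hux.symm])
    exact hx.trans (iff_congr c1 (not_congr c3))
  have adjx₂ : ∀ u x : V, u ≠ x → (G.Adj u x ↔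
      (cyc3 (g (u,true)) (g (x,true)) (g (u,false)) ↔
       ¬ cyc3 (g (u,true)) (g (x,false)) (g (u,false)))) := by
    intro u x hux
    have hx := D₂.adj_xor hE₂ hux
    have c1 := co₂ (u,true) (x,true) (u,false)
      (by simp [hux]) (by simp) (by simp [Ne, Prod.ext_iff, hux, hux.symm])
    have c3 := co₂ (u,true) (x,false) (u,false)
      (by simp [Ne, Prod.ext_iff, hux, hux.symm]) (by simp) (by simp [Ne, Prod.ext_iff, hux, hux.symm])
    exact hx.trans (iff_congr c1 (not_congr c3))
  have raw3 : ∀ u x : V, u ≠ x →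
      (cyc3 (f (u,true)) (f (x,false)) (f (u,false)) ↔
       cyc3 (g (u,true)) (g (x,false)) (g (u,false))) := by
    intro u x hux
    have a1 := adjx₁ u x hux
    have a2 := adjx₂ u x hux
    have r1 := raw1 u x hux
    by_cases hA : G.Adj u x
    · have t1 := a1.mp hA
      have t2 := a2.mp hA
      have v1 := iff_not_comm.mp t1
      have v2 := iff_not_comm.mp t2
      exact (v1.trans (not_congr r1)).trans v2.symm
    · have t1 : ¬ (cyc3 (f (u,true)) (f (x,true)) (f (u,false)) ↔
          ¬ cyc3 (f (u,true)) (f (x,false)) (f (u,false))) := fun h => hA (a1.mpr h)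
      have t2 : ¬ (cyc3 (g (u,true)) (g (x,true)) (g (u,false)) ↔
          ¬ cyc3 (g (u,true)) (g (x,false)) (g (u,false))) := fun h => hA (a2.mpr h)
      have u1 := not_iff_not.mp (not_iff.mp t1)
      have u2 := not_iff_not.mp (not_iff.mp t2)
      exact (u1.symm.trans r1).trans u2
  have side : ∀ x w : V, x ≠ w →
      ((cyc3 (f (x,true)) (f (w,true)) (f (w,false)) ↔
        cyc3 (g (x,true)) (g (w,true)) (g (w,false))) ∧
       (cyc3 (f (x,false)) (f (w,true)) (f (w,false)) ↔
        cyc3 (g (x,false)) (g (w,true)) (g (w,false)))) := by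
    intro x w hxw
    have pd₁ := pairSide (f (x,true)) (f (x,false)) (f (w,true)) (f (w,false))
      ⟨fne _ _ (by simp), fne _ _ (by simp [Ne, Prod.ext_iff, hxw, hxw.symm]),
       fne _ _ (by simp [Ne, Prod.ext_iff, hxw, hxw.symm]), fne _ _ (by simp [Ne, Prod.ext_iff, hxw, hxw.symm]),
       fne _ _ (by simp [Ne, Prod.ext_iff, hxw, hxw.symm]), fne _ _ (by simp)⟩
    have pd₂ := pairSide (g (x,true)) (g (x,false)) (g (w,true)) (g (w,false))
      ⟨gne _ _ (by simp), gne _ _ (by simp [Ne, Prod.ext_iff, hxw, hxw.symm]),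
       gne _ _ (by simp [Ne, Prod.ext_iff, hxw, hxw.symm]), gne _ _ (by simp [Ne, Prod.ext_iff, hxw, hxw.symm]),
       gne _ _ (by simp [Ne, Prod.ext_iff, hxw, hxw.symm]), gne _ _ (by simp)⟩
    have r1 := raw1 x w hxw
    have r2 := raw1 w x hxw.symm
    have r3 := raw3 x w hxw
    constructor
    · rw [pd₁.1, pd₂.1, r2]
    · rw [pd₁.2, pd₂.2, r1, r2, r3]
  have crossf : ∀ v w : V, G.Adj v w →
      (cyc3 (f (v,true)) (f (w,true)) (f (w,false)) ↔
       ¬ cyc3 (f (v,false)) (f (w,true)) (f (w,false))) := by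
    intro v w hadj
    have hvw := hadj.ne
    exact crossSide (f (v,true)) (f (v,false)) (f (w,true)) (f (w,false))
      ⟨fne _ _ (by simp), fne _ _ (by simp [Ne, Prod.ext_iff, hvw, hvw.symm]),
       fne _ _ (by simp [Ne, Prod.ext_iff, hvw, hvw.symm]), fne _ _ (by simp [Ne, Prod.ext_iff, hvw, hvw.symm]),
       fne _ _ (by simp [Ne, Prod.ext_iff, hvw, hvw.symm]), fne _ _ (by simp)⟩
      ((adjx₁ v w hvw).mp hadj)
  have crossg : ∀ v w : V, G.Adj v w →
      (cyc3 (g (v,true)) (g (w,true)) (g (w,false)) ↔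
       ¬ cyc3 (g (v,false)) (g (w,true)) (g (w,false))) := by
    intro v w hadj
    have hvw := hadj.ne
    exact crossSide (g (v,true)) (g (v,false)) (g (w,true)) (g (w,false))
      ⟨gne _ _ (by simp), gne _ _ (by simp [Ne, Prod.ext_iff, hvw, hvw.symm]),
       gne _ _ (by simp [Ne, Prod.ext_iff, hvw, hvw.symm]), gne _ _ (by simp [Ne, Prod.ext_iff, hvw, hvw.symm]),
       gne _ _ (by simp [Ne, Prod.ext_iff, hvw, hvw.symm]), gne _ _ (by simp)⟩
      ((adjx₂ v w hvw).mp hadj)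
  have KEY := abstract_key G hconn v₀ f g hfinj hginj hf0 hg0 hfpos hgpos side crossf crossg
  have hfg : ∀ a : V × Bool, f a = g a := by
    intro a
    have r1 := rank_eq f (2 * Fintype.card V) hfinj hflt hfsurj a
    have r2 := rank_eq g (2 * Fintype.card V) hginj hglt hgsurj a
    have hset : (Finset.univ.filter fun b => f b < f a) =
        (Finset.univ.filter fun b => g b < g a) := by
      ext b
      simp only [Finset.mem_filter, Finset.mem_univ, true_and]
      exact KEY b a
    rw [r1, r2, hset]
  have hr : dlt (2 * Fintype.card V) (E₁ v₀ true).1 (E₂ v₀ true).1 < (2 * Fintype.card V) :=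
    dlt_lt (E₁ v₀ true).isLt (E₂ v₀ true).isLt
  refine ⟨⟨dlt (2 * Fintype.card V) (E₁ v₀ true).1 (E₂ v₀ true).1, hr⟩, ?_⟩
  intro i
  have hEi : E₁ (D₁.word i) (D₁.isHead i) = i := (hC₁ i).symm
  have key : E₂ (D₁.word i) (D₁.isHead i) =
      i + ⟨dlt (2 * Fintype.card V) (E₁ v₀ true).1 (E₂ v₀ true).1, hr⟩ := by
    apply Fin.ext
    have ha : dlt (2 * Fintype.card V) (E₁ v₀ true).1 (E₁ (D₁.word i) (D₁.isHead i)).1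
        = dlt (2 * Fintype.card V) (E₂ v₀ true).1 (E₂ (D₁.word i) (D₁.isHead i)).1 := by
      have := hfg (D₁.word i, D₁.isHead i)
      simp only [hf, hg] at this
      exact this
    rw [hEi] at ha
    have h1 := i.isLt
    have h2 := (E₁ v₀ true).isLt
    have h3 := (E₂ v₀ true).isLt
    have h4 := (E₂ (D₁.word i) (D₁.isHead i)).isLt
    rw [Fin.val_add]
    show (E₂ (D₁.word i) (D₁.isHead i)).1 =
      (i.1 + dlt (2 * Fintype.card V) (E₁ v₀ true).1 (E₂ v₀ true).1) % (2 * Fintype.card V)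
    rw [mod_two_cases (by omega)]
    simp only [dlt] at ha ⊢
    split_ifs at ha ⊢ <;> omega
  constructor
  · rw [← key]; exact (hE₂ (D₁.word i) (D₁.isHead i)).1
  · rw [← key]; exact (hE₂ (D₁.word i) (D₁.isHead i)).2
end

section
/- Let G be a graph with a Naji-system solution β containing an induced claw on {x,a,b,c} with center x. Exactly one of the following holds: (i) all three of β(a,b)+β(a,c), β(b,a)+β(b,c), β(c,a)+β(c,b) equal 1, or (ii) exactly one of them equals 1 and in this case β restricted to {x,a,b,c} is chordal (realizable by an oriented chord diagram of the claw). -/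
namespace NajiClawAux

instance {m : ℕ} (p k q : Fin m) : Decidable (cycBtw p k q) := by
  unfold cycBtw; infer_instance

def W8 : Fin 8 → Fin 4 := ![0,1,2,3,0,3,2,1]

def hPos (P Q R X : ZMod 2) : Fin 4 → Fin 8 :=
  ![if X = P then 0 else 4, if P = 0 then 1 else 7, if Q = 0 then 6 else 2, if R = 0 then 5 else 3]

def tPos (P Q R X : ZMod 2) : Fin 4 → Fin 8 :=
  ![if X = P then 4 else 0, if P = 0 then 7 else 1, if Q = 0 then 2 else 6, if R = 0 then 3 else 5]

def Hd (P Q R X : ZMod 2) : Fin 8 → Bool := fun i => decide (i = hPos P Q R X (W8 i))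

def B (P Q R X : ZMod 2) : Fin 4 → Fin 4 → ZMod 2 :=
  ![![0, X, 1+P+Q+X, 1+P+R+X],
    ![1+X, 0, P, P],
    ![P+Q+X, Q, 0, 1+Q],
    ![P+R+X, R, R, 0]]

lemma M1 : ∀ v : Fin 4, (Finset.univ.filter fun i => W8 i = v).card = 2 := by decide
lemma M2 : ∀ P Q R X : ZMod 2, ∀ v : Fin 4,
    (Finset.univ.filter fun i => W8 i = v ∧ Hd P Q R X i = true).card = 1 := by decide
lemma M5h : ∀ P Q R X : ZMod 2, ∀ i : Fin 8, Hd P Q R X i = true → i = hPos P Q R X (W8 i) := by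
  decide
lemma M5t : ∀ P Q R X : ZMod 2, ∀ i : Fin 8, Hd P Q R X i = false → i = tPos P Q R X (W8 i) := by
  decide
lemma M6 : ∀ P Q R X : ZMod 2, ∀ u v : Fin 4, u ≠ v →
    (B P Q R X u v = 0 ↔ cycBtw (hPos P Q R X u) (hPos P Q R X v) (tPos P Q R X u)) := by decide
lemma M34 : ∀ u v : Fin 4, u ≠ v → ((u = 0 ∨ v = 0) ↔
    ∃ i j : Fin 8, i < j ∧ W8 i = u ∧ W8 j = u ∧
      (Finset.univ.filter fun k => W8 k = v ∧ i < k ∧ k < j).card = 1) := by decide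

lemma cardCast {m : ℕ} (h : m = 8) (P : Fin 8 → Prop) [DecidablePred P] :
    (Finset.univ.filter fun i : Fin m => P (Fin.cast h i)).card =
    (Finset.univ.filter P).card := by
  subst h; simp [Fin.cast_refl]

lemma cycBtw_cast {m : ℕ} (h : m = 8) (a b c : Fin m) :
    cycBtw a b c ↔ cycBtw (Fin.cast h a) (Fin.cast h b) (Fin.cast h c) := by
  subst h; rfl

lemma existsCast {m : ℕ} (h : m = 8) (u v : Fin 4) :
    (∃ i j : Fin m, i < j ∧ W8 (Fin.cast h i) = u ∧ W8 (Fin.cast h j) = u ∧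
      (Finset.univ.filter fun k : Fin m => W8 (Fin.cast h k) = v ∧ i < k ∧ k < j).card = 1) ↔
    (∃ i j : Fin 8, i < j ∧ W8 i = u ∧ W8 j = u ∧
      (Finset.univ.filter fun k => W8 k = v ∧ i < k ∧ k < j).card = 1) := by
  subst h; rfl

lemma z1 : ∀ s t : ZMod 2, s + t = 1 → t = 1 + s := by decide
lemma z0 : ∀ s t : ZMod 2, s + t = 0 → t = s := by decide
lemma z4 : ∀ a b c d : ZMod 2, a + b + c + d = 1 → d = 1 + a + b + c := by decide
lemma z4' : ∀ p q x t : ZMod 2, (1 + p + q + x) + t = 1 → t = p + q + x := by decide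

lemma core {W : Type*} [Fintype W] [DecidableEq W] (G : SimpleGraph W) (β : W → W → ZMod 2)
    (x p q r : W)
    (hW : ∀ w : W, w = x ∨ w = p ∨ w = q ∨ w = r)
    (hcard : Fintype.card W = 4)
    (hxp : x ≠ p) (hxq : x ≠ q) (hxr : x ≠ r) (hpq : p ≠ q) (hpr : p ≠ r) (hqr : q ≠ r)
    (axp : G.Adj x p) (axq : G.Adj x q) (axr : G.Adj x r)
    (npq : ¬G.Adj p q) (npr : ¬G.Adj p r) (nqr : ¬G.Adj q r)
    (e1p : β x p + β p x = 1) (e1q : β x q + β q x = 1) (e1r : β x r + β r x = 1)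
    (sp : β p q + β p r = 0) (sq : β q p + β q r = 1) (sr : β r q + β r p = 0)
    (e3pq : β p q + β q p + β x p + β x q = 1)
    (e3pr : β p r + β r p + β x p + β x r = 1) :
    NajiChordal G β := by
  have h8 : 2 * Fintype.card W = 8 := by rw [hcard]
  have eltInj : ∀ u v : Fin 4, (![x,p,q,r]) u = (![x,p,q,r]) v → u = v := by
    intro u v h
    fin_cases u <;> fin_cases v <;> simp only [Matrix.cons_val_zero, Matrix.cons_val_one,
      Matrix.head_cons, Matrix.cons_val_two, Matrix.tail_cons, Matrix.cons_val_three] at h ⊢ <;>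
      first
        | rfl
        | exact absurd h hxp | exact absurd h hxq | exact absurd h hxr
        | exact absurd h hpq | exact absurd h hpr | exact absurd h hqr
        | exact absurd h.symm hxp | exact absurd h.symm hxq | exact absurd h.symm hxr
        | exact absurd h.symm hpq | exact absurd h.symm hpr | exact absurd h.symm hqr
  have idx : ∀ w : W, ∃ u : Fin 4, (![x,p,q,r]) u = w := by
    intro w
    rcases hW w with rfl | rfl | rfl | rfl
    exacts [⟨0, rfl⟩, ⟨1, rfl⟩, ⟨2, rfl⟩, ⟨3, rfl⟩]
  have vpr : β p r = β p q := z0 _ _ sp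
  have vqr : β q r = 1 + β q p := z1 _ _ sq
  have vrp : β r p = β r q := z0 _ _ sr
  have vpx : β p x = 1 + β x p := z1 _ _ e1p
  have vxq : β x q = 1 + β p q + β q p + β x p := z4 _ _ _ _ e3pq
  have vqx : β q x = β p q + β q p + β x p := by
    apply z4' (β p q) (β q p) (β x p)
    rw [← vxq]; exact e1q
  have vxr : β x r = 1 + β p q + β r q + β x p := by
    have h' : β p q + β r q + β x p + β x r = 1 := by rw [← vpr, ← vrp]; exact e3pr
    exact z4 _ _ _ _ h'
  have vrx : β r x = β p q + β r q + β x p := by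
    apply z4' (β p q) (β r q) (β x p)
    rw [← vxr]; exact e1r
  have agree : ∀ u v : Fin 4, u ≠ v →
      β ((![x,p,q,r]) u) ((![x,p,q,r]) v) = B (β p q) (β q p) (β r q) (β x p) u v := by
    intro u v huv
    fin_cases u <;> fin_cases v <;> simp only [Matrix.cons_val_zero, Matrix.cons_val_one,
      Matrix.head_cons, Matrix.cons_val_two, Matrix.tail_cons, Matrix.cons_val_three, B] <;>
      first
        | exact absurd rfl huv
        | rfl
        | exact vpr | exact vqr | exact vrp | exact vpx
        | exact vxq | exact vqx | exact vxr | exact vrx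
  refine ⟨⟨fun i => (![x,p,q,r]) (W8 (Fin.cast h8 i)),
    fun i => Hd (β p q) (β q p) (β r q) (β x p) (Fin.cast h8 i), ?_, ?_, ?_⟩, ?_⟩
  · -- occ_two
    intro w
    obtain ⟨u, rfl⟩ := idx w
    have key : ∀ i : Fin (2 * Fintype.card W),
        ((![x,p,q,r]) (W8 (Fin.cast h8 i)) = (![x,p,q,r]) u) ↔ (W8 (Fin.cast h8 i) = u) :=
      fun i => ⟨eltInj _ _, fun h => by rw [h]⟩
    simp only [key]
    rw [cardCast h8 (fun j => W8 j = u)]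
    exact M1 u
  · -- head_one
    intro w
    obtain ⟨u, rfl⟩ := idx w
    have key : ∀ i : Fin (2 * Fintype.card W),
        ((![x,p,q,r]) (W8 (Fin.cast h8 i)) = (![x,p,q,r]) u) ↔ (W8 (Fin.cast h8 i) = u) :=
      fun i => ⟨eltInj _ _, fun h => by rw [h]⟩
    simp only [key]
    rw [cardCast h8 (fun j => W8 j = u ∧ Hd (β p q) (β q p) (β r q) (β x p) j = true)]
    exact M2 _ _ _ _ u
  · -- adj_iff
    intro w1 w2 hne
    obtain ⟨u, rfl⟩ := idx w1
    obtain ⟨v, rfl⟩ := idx w2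
    have huv : u ≠ v := fun h => hne (by rw [h])
    have keyu : ∀ i : Fin (2 * Fintype.card W),
        ((![x,p,q,r]) (W8 (Fin.cast h8 i)) = (![x,p,q,r]) u) ↔ (W8 (Fin.cast h8 i) = u) :=
      fun i => ⟨eltInj _ _, fun h => by rw [h]⟩
    have keyv : ∀ i : Fin (2 * Fintype.card W),
        ((![x,p,q,r]) (W8 (Fin.cast h8 i)) = (![x,p,q,r]) v) ↔ (W8 (Fin.cast h8 i) = v) :=
      fun i => ⟨eltInj _ _, fun h => by rw [h]⟩
    have adjIff : G.Adj ((![x,p,q,r]) u) ((![x,p,q,r]) v) ↔ (u = 0 ∨ v = 0) := by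
      fin_cases u <;> fin_cases v <;> simp only [Matrix.cons_val_zero, Matrix.cons_val_one,
        Matrix.head_cons, Matrix.cons_val_two, Matrix.tail_cons, Matrix.cons_val_three] <;>
        first
          | exact absurd rfl huv
          | exact iff_of_true axp (by decide) | exact iff_of_true axq (by decide)
          | exact iff_of_true axr (by decide)
          | exact iff_of_true (G.adj_symm axp) (by decide) | exact iff_of_true (G.adj_symm axq) (by decide)
          | exact iff_of_true (G.adj_symm axr) (by decide)
          | exact iff_of_false npq (by decide) | exact iff_of_false npr (by decide)
          | exact iff_of_false nqr (by decide)
          | exact iff_of_false (fun h => npq (G.adj_symm h)) (by decide)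
          | exact iff_of_false (fun h => npr (G.adj_symm h)) (by decide)
          | exact iff_of_false (fun h => nqr (G.adj_symm h)) (by decide)
    simp only [keyu, keyv]
    exact adjIff.trans ((M34 u v huv).trans (existsCast h8 u v).symm)
  · -- Realizes
    intro w1 w2 hne hu tu hv hwu hhu hwt hht hwv hhv
    obtain ⟨u, rfl⟩ := idx w1
    obtain ⟨v, rfl⟩ := idx w2
    have huv : u ≠ v := fun h => hne (by rw [h])
    have iu : W8 (Fin.cast h8 hu) = u := eltInj _ _ hwu
    have it : W8 (Fin.cast h8 tu) = u := eltInj _ _ hwt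
    have iv : W8 (Fin.cast h8 hv) = v := eltInj _ _ hwv
    have pu : Fin.cast h8 hu = hPos (β p q) (β q p) (β r q) (β x p) u := by
      have := M5h _ _ _ _ _ hhu; rwa [iu] at this
    have pt : Fin.cast h8 tu = tPos (β p q) (β q p) (β r q) (β x p) u := by
      have := M5t _ _ _ _ _ hht; rwa [it] at this
    have pv : Fin.cast h8 hv = hPos (β p q) (β q p) (β r q) (β x p) v := by
      have := M5h _ _ _ _ _ hhv; rwa [iv] at this
    rw [agree u v huv, cycBtw_cast h8 hu hv tu, pu, pt, pv]
    exact M6 _ _ _ _ u v huv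

end NajiClawAux


set_option maxHeartbeats 2000000 in
/-- For an induced claw `{x,a,b,c}` with centre `x`, exactly one of the
following holds: (i) all three of `β a b + β a c`, `β b a + β b c`,
`β c a + β c b` equal `1`; or (ii) exactly one of them equals `1`, and then the
restriction of `β` to `{x,a,b,c}` is chordal. -/
theorem naji_claw_dichotomy {V : Type*} [Fintype V] [DecidableEq V]
    (G : SimpleGraph V) (β : V → V → ZMod 2) (hβ : NajiSolution G β)
    (x a b c : V) (hab : a ≠ b) (hac : a ≠ c) (hbc : b ≠ c)
    (hxa : G.Adj x a) (hxb : G.Adj x b) (hxc : G.Adj x c)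
    (nab : ¬G.Adj a b) (nbc : ¬G.Adj b c) (nca : ¬G.Adj c a) :
    Xor'
      (β a b + β a c = 1 ∧ β b a + β b c = 1 ∧ β c a + β c b = 1)
      (((β a b + β a c = 1 ∧ β b a + β b c = 0 ∧ β c a + β c b = 0) ∨
        (β a b + β a c = 0 ∧ β b a + β b c = 1 ∧ β c a + β c b = 0) ∨
        (β a b + β a c = 0 ∧ β b a + β b c = 0 ∧ β c a + β c b = 1)) ∧
       NajiChordal (G.induce (({x, a, b, c} : Finset V) : Set V))
         (fun u v => β u.1 v.1)) := by
  obtain ⟨h1, h2, h3⟩ := hβ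
  have hax : x ≠ a := hxa.ne
  have hbx : x ≠ b := hxb.ne
  have hcx : x ≠ c := hxc.ne
  have nba : ¬G.Adj b a := fun h => nab (G.adj_symm h)
  have ncb : ¬G.Adj c b := fun h => nbc (G.adj_symm h)
  have nac : ¬G.Adj a c := fun h => nca (G.adj_symm h)
  have zpar : ∀ ab ba ac ca bc cb xa xb xc : ZMod 2,
      ab + ba + xa + xb = 1 → ac + ca + xa + xc = 1 → bc + cb + xb + xc = 1 →
      ((ab+ac=1 ∧ ba+bc=1 ∧ ca+cb=1) ∨ (ab+ac=1 ∧ ba+bc=0 ∧ ca+cb=0) ∨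
       (ab+ac=0 ∧ ba+bc=1 ∧ ca+cb=0) ∨ (ab+ac=0 ∧ ba+bc=0 ∧ ca+cb=1)) := by decide
  have e3ab := h3 x a b hab hxa hxb nab
  have e3ac := h3 x a c hac hxa hxc nac
  have e3bc := h3 x b c hbc hxb hxc nbc
  have disj := zpar _ _ _ _ _ _ _ _ _ e3ab e3ac e3bc
  have hcard4 : Fintype.card ↥((({x,a,b,c} : Finset V)) : Set V) = 4 := by
    rw [← Set.toFinset_card, Finset.toFinset_coe]
    rw [Finset.card_insert_of_notMem (by simp [hax, hbx, hcx]),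
        Finset.card_insert_of_notMem (by simp [hab, hac]),
        Finset.card_insert_of_notMem (by simp [hbc]), Finset.card_singleton]
  have key : ∀ p q r : V,
      p ∈ ((({x,a,b,c} : Finset V)) : Set V) → q ∈ ((({x,a,b,c} : Finset V)) : Set V) →
      r ∈ ((({x,a,b,c} : Finset V)) : Set V) →
      (∀ w : V, w ∈ ((({x,a,b,c} : Finset V)) : Set V) → w = x ∨ w = p ∨ w = q ∨ w = r) →
      x ≠ p → x ≠ q → x ≠ r → p ≠ q → p ≠ r → q ≠ r →
      G.Adj x p → G.Adj x q → G.Adj x r → ¬G.Adj p q → ¬G.Adj p r → ¬G.Adj q r →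
      β p q + β p r = 0 → β q p + β q r = 1 → β r q + β r p = 0 →
      NajiChordal (G.induce ((({x,a,b,c} : Finset V)) : Set V)) (fun u v => β u.1 v.1) := by
    intro p q r hp hq hr hsurj hxp hxq hxr hpq hpr hqr axp axq axr npq npr nqr sp sq sr
    have hx : x ∈ ((({x,a,b,c} : Finset V)) : Set V) := by simp
    refine NajiClawAux.core (G.induce ((({x,a,b,c} : Finset V)) : Set V))
      (fun u v => β u.1 v.1) ⟨x, hx⟩ ⟨p, hp⟩ ⟨q, hq⟩ ⟨r, hr⟩ ?_ hcard4
      (fun h => hxp (congrArg Subtype.val h)) (fun h => hxq (congrArg Subtype.val h))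
      (fun h => hxr (congrArg Subtype.val h)) (fun h => hpq (congrArg Subtype.val h))
      (fun h => hpr (congrArg Subtype.val h)) (fun h => hqr (congrArg Subtype.val h))
      axp axq axr npq npr nqr
      (h1 x p axp) (h1 x q axq) (h1 x r axr) sp sq sr
      (h3 x p q hpq axp axq npq) (h3 x p r hpr axp axr npr)
    intro w
    rcases hsurj w.1 w.2 with h | h | h | h
    · exact Or.inl (Subtype.ext h)
    · exact Or.inr (Or.inl (Subtype.ext h))
    · exact Or.inr (Or.inr (Or.inl (Subtype.ext h)))
    · exact Or.inr (Or.inr (Or.inr (Subtype.ext h)))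
  have memall : ∀ w : V, w ∈ ((({x,a,b,c} : Finset V)) : Set V) →
      w = x ∨ w = a ∨ w = b ∨ w = c := by
    intro w hw
    simpa using hw
  rcases disj with ⟨d1, d2, d3⟩ | ⟨d1, d2, d3⟩ | ⟨d1, d2, d3⟩ | ⟨d1, d2, d3⟩
  · refine Or.inl ⟨⟨d1, d2, d3⟩, ?_⟩
    rintro ⟨(⟨_, h, _⟩ | ⟨h, _, _⟩ | ⟨h, _, _⟩), _⟩
    · rw [h] at d2; exact absurd d2 (by decide)
    · rw [h] at d1; exact absurd d1 (by decide)
    · rw [h] at d1; exact absurd d1 (by decide)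
  · refine Or.inr ⟨⟨Or.inl ⟨d1, d2, d3⟩, ?_⟩, ?_⟩
    · refine key b a c (by simp) (by simp) (by simp)
        (fun w hw => by rcases memall w hw with h|h|h|h <;> tauto)
        hbx hax hcx hab.symm hbc hac hxb hxa hxc nba nbc nac d2 d1 d3
    · rintro ⟨_, h, _⟩
      rw [h] at d2; exact absurd d2 (by decide)
  · refine Or.inr ⟨⟨Or.inr (Or.inl ⟨d1, d2, d3⟩), ?_⟩, ?_⟩
    · refine key a b c (by simp) (by simp) (by simp)
        (fun w hw => by rcases memall w hw with h|h|h|h <;> tauto)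
        hax hbx hcx hab hac hbc hxa hxb hxc nab nac nbc d1 d2 ?_
      rw [add_comm]; exact d3
    · rintro ⟨h, _, _⟩
      rw [h] at d1; exact absurd d1 (by decide)
  · refine Or.inr ⟨⟨Or.inr (Or.inr ⟨d1, d2, d3⟩), ?_⟩, ?_⟩
    · refine key a c b (by simp) (by simp) (by simp)
        (fun w hw => by rcases memall w hw with h|h|h|h <;> tauto)
        hax hcx hbx hac hab hbc.symm hxa hxc hxb nac nab ncb ?_ d3 ?_
      · rw [add_comm]; exact d1
      · rw [add_comm]; exact d2
    · rintro ⟨h, _, _⟩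
      rw [h] at d1; exact absurd d1 (by decide)
end
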